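/- For all distinct positive real numbers a and b, (L(I(a,b), G(a,b)))² < L(a,b)·L(I(a,b), G(a,b)) < L(I(a,b)², G(a,b)²) < L(a,b)·(I(a,b) + G(a,b))/2. -/

import Mathlib

theorem pos_aux {f f' : ℝ → ℝ} (hder : ∀ s, HasDerivAt f (f' s) s)
    (h0 : f 0 = 0) (hpos : ∀ s, 0 < s → 0 < f' s) : ∀ s, 0 < s → 0 < f s := by
  intro s hs
  have hmono : StrictMonoOn f (Set.Ici (0:ℝ)) := by
    apply strictMonoOn_of_deriv_pos (convex_Ici 0)
    · exact fun x _ => (hder x).continuousAt.continuousWithinAt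
    · intro x hx
      rw [interior_Ici] at hx
      rw [(hder x).deriv]
      exact hpos x hx
  have h2 := hmono Set.self_mem_Ici (Set.mem_Ici.2 hs.le) hs
  rwa [h0] at h2

theorem nonneg_aux {f f' : ℝ → ℝ} (hder : ∀ s, HasDerivAt f (f' s) s)
    (h0 : f 0 = 0) (hpos : ∀ s, 0 < s → s < 1 → 0 ≤ f' s) :
    ∀ s, 0 ≤ s → s ≤ 1 → 0 ≤ f s := by
  intro s hs hs1
  have hmono : MonotoneOn f (Set.Icc (0:ℝ) 1) := by
    apply monotoneOn_of_deriv_nonneg (convex_Icc 0 1)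
    · exact fun x _ => (hder x).continuousAt.continuousWithinAt
    · intro x _; exact ((hder x).differentiableAt).differentiableWithinAt
    · intro x hx
      rw [interior_Icc] at hx
      rw [(hder x).deriv]; exact hpos x hx.1 hx.2
  have h2 := hmono (Set.mem_Icc.2 ⟨le_refl 0, zero_le_one⟩) (Set.mem_Icc.2 ⟨hs, hs1⟩) hs
  rwa [h0] at h2

theorem hasDerivAt_congr_d {f : ℝ → ℝ} {d d' x : ℝ} (h : HasDerivAt f d x) (e : d' = d) :
    HasDerivAt f d' x := by rw [e]; exact h

lemma b2_pos : ∀ s : ℝ, 0 < s → 0 < s * Real.cosh s - Real.sinh s := by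
  refine pos_aux (f' := fun s => s * Real.sinh s) ?_ ?_ ?_
  · intro s
    have H := ((hasDerivAt_id s).mul (Real.hasDerivAt_cosh s)).sub (Real.hasDerivAt_sinh s)
    exact hasDerivAt_congr_d H (by simp only [id_eq]; ring)
  · norm_num
  · intro s hs; exact mul_pos hs (Real.sinh_pos_iff.mpr hs)

lemma b1_pos : ∀ s : ℝ, 0 < s → 0 < Real.sinh s - s := by
  refine pos_aux (f' := fun s => Real.cosh s - 1) ?_ ?_ ?_
  · intro s; exact (Real.hasDerivAt_sinh s).sub (hasDerivAt_id s)
  · norm_num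
  · intro s hs; have := Real.one_lt_cosh.mpr (ne_of_gt hs); linarith

lemma b3_pos : ∀ s : ℝ, 0 < s → 0 < Real.cosh s - (1 + s^2/2) := by
  refine pos_aux (f' := fun s => Real.sinh s - s) ?_ ?_ b1_pos
  · intro s
    have H := (Real.hasDerivAt_cosh s).sub ((hasDerivAt_const s (1:ℝ)).add
      ((hasDerivAt_pow 2 s).div_const 2))
    exact hasDerivAt_congr_d H (by push_cast; ring)
  · norm_num

lemma b4_pos : ∀ s : ℝ, 0 < s → 0 < Real.sinh s - (s + s^3/6) := by
  refine pos_aux (f' := fun s => Real.cosh s - (1 + s^2/2)) ?_ ?_ b3_pos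
  · intro s
    have H := (Real.hasDerivAt_sinh s).sub ((hasDerivAt_id s).add
      ((hasDerivAt_pow 3 s).div_const 6))
    exact hasDerivAt_congr_d H (by push_cast; ring)
  · norm_num

lemma b5_pos : ∀ s : ℝ, 0 < s → 0 < Real.cosh s - (1 + s^2/2 + s^4/24) := by
  refine pos_aux (f' := fun s => Real.sinh s - (s + s^3/6)) ?_ ?_ b4_pos
  · intro s
    have H := (Real.hasDerivAt_cosh s).sub (((hasDerivAt_const s (1:ℝ)).add
      ((hasDerivAt_pow 2 s).div_const 2)).add ((hasDerivAt_pow 4 s).div_const 24))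
    exact hasDerivAt_congr_d H (by push_cast; ring)
  · norm_num

lemma sq_lt_cosh_add_one (s : ℝ) (hs : 0 < s) : s^2 < Real.cosh s + 1 := by
  nlinarith [b5_pos s hs, sq_nonneg (s^2 - 6)]

lemma cosh_le_on_unit : ∀ s : ℝ, 0 ≤ s → s ≤ 1 → Real.cosh s ≤ 8/5 := by
  intro s hs hs1
  have h1 : Real.cosh s ≤ Real.cosh 1 := by
    rw [Real.cosh_le_cosh]
    rw [abs_of_nonneg hs, abs_one]; exact hs1
  have h2 : Real.cosh 1 < 8/5 := by
    rw [Real.cosh_eq]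
    have e1 : Real.exp 1 < 2.7182818286 := Real.exp_one_lt_d9
    have e2 : (2.7182818283 : ℝ) < Real.exp 1 := Real.exp_one_gt_d9
    have e3 : Real.exp (-1 : ℝ) = (Real.exp 1)⁻¹ := by rw [Real.exp_neg]
    rw [e3]
    have e4 : (Real.exp 1)⁻¹ < (2.7182818283 : ℝ)⁻¹ := by
      apply inv_strictAnti₀ (by norm_num) e2
    nlinarith
  linarith

lemma u2 : ∀ s : ℝ, 0 ≤ s → s ≤ 1 → 0 ≤ (8/5) * s - Real.sinh s := by
  refine nonneg_aux (f' := fun s => 8/5 - Real.cosh s) ?_ ?_ ?_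
  · intro s
    have H := ((hasDerivAt_id s).const_mul ((8:ℝ)/5)).sub (Real.hasDerivAt_sinh s)
    exact hasDerivAt_congr_d H (by ring)
  · norm_num
  · intro s hs hs1; have := cosh_le_on_unit s hs.le hs1.le; linarith

lemma u3 : ∀ s : ℝ, 0 ≤ s → s ≤ 1 → 0 ≤ 1 + (4/5) * s^2 - Real.cosh s := by
  refine nonneg_aux (f' := fun s => (8/5) * s - Real.sinh s) ?_ ?_ ?_
  · intro s
    have H := ((hasDerivAt_const s (1:ℝ)).add ((hasDerivAt_pow 2 s).const_mul ((4:ℝ)/5))).sub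
      (Real.hasDerivAt_cosh s)
    exact hasDerivAt_congr_d H (by push_cast; ring)
  · norm_num
  · intro s hs hs1; exact u2 s hs.le hs1.le

lemma u4 : ∀ s : ℝ, 0 ≤ s → s ≤ 1 → 0 ≤ s + (4/15) * s^3 - Real.sinh s := by
  refine nonneg_aux (f' := fun s => 1 + (4/5) * s^2 - Real.cosh s) ?_ ?_ ?_
  · intro s
    have H := ((hasDerivAt_id s).add ((hasDerivAt_pow 3 s).const_mul ((4:ℝ)/15))).sub
      (Real.hasDerivAt_sinh s)
    exact hasDerivAt_congr_d H (by push_cast; ring)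
  · norm_num
  · intro s hs hs1; exact u3 s hs.le hs1.le

lemma u5 : ∀ s : ℝ, 0 ≤ s → s ≤ 1 → 0 ≤ 1 + s^2/2 + (1/15) * s^4 - Real.cosh s := by
  refine nonneg_aux (f' := fun s => s + (4/15) * s^3 - Real.sinh s) ?_ ?_ ?_
  · intro s
    have H := (((hasDerivAt_const s (1:ℝ)).add ((hasDerivAt_pow 2 s).div_const 2)).add
      ((hasDerivAt_pow 4 s).const_mul ((1:ℝ)/15))).sub (Real.hasDerivAt_cosh s)
    exact hasDerivAt_congr_d H (by push_cast; ring)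
  · norm_num
  · intro s hs hs1; exact u4 s hs.le hs1.le

lemma u6 : ∀ s : ℝ, 0 ≤ s → s ≤ 1 → 0 ≤ s + s^3/6 + (1/75) * s^5 - Real.sinh s := by
  refine nonneg_aux (f' := fun s => 1 + s^2/2 + (1/15) * s^4 - Real.cosh s) ?_ ?_ ?_
  · intro s
    have H := (((hasDerivAt_id s).add ((hasDerivAt_pow 3 s).div_const 6)).add
      ((hasDerivAt_pow 5 s).const_mul ((1:ℝ)/75))).sub (Real.hasDerivAt_sinh s)
    exact hasDerivAt_congr_d H (by push_cast; ring)
  · norm_num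
  · intro s hs hs1; exact u5 s hs.le hs1.le

lemma u7 : ∀ s : ℝ, 0 ≤ s → s ≤ 1 → 0 ≤ 1 + s^2/2 + s^4/24 + (1/450) * s^6 - Real.cosh s := by
  refine nonneg_aux (f' := fun s => s + s^3/6 + (1/75) * s^5 - Real.sinh s) ?_ ?_ ?_
  · intro s
    have H := ((((hasDerivAt_const s (1:ℝ)).add ((hasDerivAt_pow 2 s).div_const 2)).add
      ((hasDerivAt_pow 4 s).div_const 24)).add
      ((hasDerivAt_pow 6 s).const_mul ((1:ℝ)/450))).sub (Real.hasDerivAt_cosh s)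
    exact hasDerivAt_congr_d H (by push_cast; ring)
  · norm_num
  · intro s hs hs1; exact u6 s hs.le hs1.le

lemma cosh_one_ge : (3/2 : ℝ) ≤ Real.cosh 1 := by
  rw [Real.cosh_eq]
  have e2 : (2.7182818283 : ℝ) < Real.exp 1 := Real.exp_one_gt_d9
  have e3 : Real.exp (-1 : ℝ) = (Real.exp 1)⁻¹ := by rw [Real.exp_neg]
  have e5 : (0:ℝ) < Real.exp 1 := Real.exp_pos 1
  rw [e3]
  have e4 : (2.7182818286 : ℝ)⁻¹ < (Real.exp 1)⁻¹ := inv_strictAnti₀ e5 Real.exp_one_lt_d9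
  nlinarith [e4]

lemma lam0_d (s : ℝ) : HasDerivAt (fun t : ℝ => (1) * t^3 + ((-3)/2) * Real.sinh t + (-2) * t^2 * Real.sinh t + ((-1)/2) * t^2 * Real.sinh (2*t) + ((1)/2) * Real.sinh (3*t))
    ((3) * s^2 + ((-3)/2) * Real.cosh s + (-2) * s^2 * Real.cosh s + (-1) * s^2 * Real.cosh (2*s) + ((3)/2) * Real.cosh (3*s) + (-4) * s * Real.sinh s + (-1) * s * Real.sinh (2*s)) s := by
  have dC1 : HasDerivAt (fun t : ℝ => Real.cosh t) (Real.sinh s) s := Real.hasDerivAt_cosh s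
  have dC2 : HasDerivAt (fun t : ℝ => Real.cosh (2*t)) (Real.sinh (2*s) * 2) s := by
    simpa [Function.comp_def] using (Real.hasDerivAt_cosh (2*s)).comp s ((hasDerivAt_id s).const_mul (2:ℝ))
  have dC3 : HasDerivAt (fun t : ℝ => Real.cosh (3*t)) (Real.sinh (3*s) * 3) s := by
    simpa [Function.comp_def] using (Real.hasDerivAt_cosh (3*s)).comp s ((hasDerivAt_id s).const_mul (3:ℝ))
  have dS1 : HasDerivAt (fun t : ℝ => Real.sinh t) (Real.cosh s) s := Real.hasDerivAt_sinh s
  have dS2 : HasDerivAt (fun t : ℝ => Real.sinh (2*t)) (Real.cosh (2*s) * 2) s := by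
    simpa [Function.comp_def] using (Real.hasDerivAt_sinh (2*s)).comp s ((hasDerivAt_id s).const_mul (2:ℝ))
  have dS3 : HasDerivAt (fun t : ℝ => Real.sinh (3*t)) (Real.cosh (3*s) * 3) s := by
    simpa [Function.comp_def] using (Real.hasDerivAt_sinh (3*s)).comp s ((hasDerivAt_id s).const_mul (3:ℝ))
  exact hasDerivAt_congr_d ((((((hasDerivAt_pow 3 s).const_mul ((1):ℝ)).add (dS1.const_mul (((-3)/2):ℝ))).add (((hasDerivAt_pow 2 s).const_mul ((-2):ℝ)).mul dS1)).add (((hasDerivAt_pow 2 s).const_mul (((-1)/2):ℝ)).mul dS2)).add (dS3.const_mul (((1)/2):ℝ))) (by push_cast [id_eq]; ring)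

lemma lam1_d (s : ℝ) : HasDerivAt (fun t : ℝ => (3) * t^2 + ((-3)/2) * Real.cosh t + (-2) * t^2 * Real.cosh t + (-1) * t^2 * Real.cosh (2*t) + ((3)/2) * Real.cosh (3*t) + (-4) * t * Real.sinh t + (-1) * t * Real.sinh (2*t))
    ((6) * s + (-8) * s * Real.cosh s + (-4) * s * Real.cosh (2*s) + ((-11)/2) * Real.sinh s + (-2) * s^2 * Real.sinh s + (-1) * Real.sinh (2*s) + (-2) * s^2 * Real.sinh (2*s) + ((9)/2) * Real.sinh (3*s)) s := by
  have dC1 : HasDerivAt (fun t : ℝ => Real.cosh t) (Real.sinh s) s := Real.hasDerivAt_cosh s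
  have dC2 : HasDerivAt (fun t : ℝ => Real.cosh (2*t)) (Real.sinh (2*s) * 2) s := by
    simpa [Function.comp_def] using (Real.hasDerivAt_cosh (2*s)).comp s ((hasDerivAt_id s).const_mul (2:ℝ))
  have dC3 : HasDerivAt (fun t : ℝ => Real.cosh (3*t)) (Real.sinh (3*s) * 3) s := by
    simpa [Function.comp_def] using (Real.hasDerivAt_cosh (3*s)).comp s ((hasDerivAt_id s).const_mul (3:ℝ))
  have dS1 : HasDerivAt (fun t : ℝ => Real.sinh t) (Real.cosh s) s := Real.hasDerivAt_sinh s
  have dS2 : HasDerivAt (fun t : ℝ => Real.sinh (2*t)) (Real.cosh (2*s) * 2) s := by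
    simpa [Function.comp_def] using (Real.hasDerivAt_sinh (2*s)).comp s ((hasDerivAt_id s).const_mul (2:ℝ))
  have dS3 : HasDerivAt (fun t : ℝ => Real.sinh (3*t)) (Real.cosh (3*s) * 3) s := by
    simpa [Function.comp_def] using (Real.hasDerivAt_sinh (3*s)).comp s ((hasDerivAt_id s).const_mul (3:ℝ))
  exact hasDerivAt_congr_d ((((((((hasDerivAt_pow 2 s).const_mul ((3):ℝ)).add (dC1.const_mul (((-3)/2):ℝ))).add (((hasDerivAt_pow 2 s).const_mul ((-2):ℝ)).mul dC1)).add (((hasDerivAt_pow 2 s).const_mul ((-1):ℝ)).mul dC2)).add (dC3.const_mul (((3)/2):ℝ))).add (((hasDerivAt_id s).const_mul ((-4):ℝ)).mul dS1)).add (((hasDerivAt_id s).const_mul ((-1):ℝ)).mul dS2)) (by push_cast [id_eq]; ring)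

lemma lam2_d (s : ℝ) : HasDerivAt (fun t : ℝ => (6) * t + (-8) * t * Real.cosh t + (-4) * t * Real.cosh (2*t) + ((-11)/2) * Real.sinh t + (-2) * t^2 * Real.sinh t + (-1) * Real.sinh (2*t) + (-2) * t^2 * Real.sinh (2*t) + ((9)/2) * Real.sinh (3*t))
    ((6) + ((-27)/2) * Real.cosh s + (-2) * s^2 * Real.cosh s + (-6) * Real.cosh (2*s) + (-4) * s^2 * Real.cosh (2*s) + ((27)/2) * Real.cosh (3*s) + (-12) * s * Real.sinh s + (-12) * s * Real.sinh (2*s)) s := by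
  have dC1 : HasDerivAt (fun t : ℝ => Real.cosh t) (Real.sinh s) s := Real.hasDerivAt_cosh s
  have dC2 : HasDerivAt (fun t : ℝ => Real.cosh (2*t)) (Real.sinh (2*s) * 2) s := by
    simpa [Function.comp_def] using (Real.hasDerivAt_cosh (2*s)).comp s ((hasDerivAt_id s).const_mul (2:ℝ))
  have dC3 : HasDerivAt (fun t : ℝ => Real.cosh (3*t)) (Real.sinh (3*s) * 3) s := by
    simpa [Function.comp_def] using (Real.hasDerivAt_cosh (3*s)).comp s ((hasDerivAt_id s).const_mul (3:ℝ))
  have dS1 : HasDerivAt (fun t : ℝ => Real.sinh t) (Real.cosh s) s := Real.hasDerivAt_sinh s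
  have dS2 : HasDerivAt (fun t : ℝ => Real.sinh (2*t)) (Real.cosh (2*s) * 2) s := by
    simpa [Function.comp_def] using (Real.hasDerivAt_sinh (2*s)).comp s ((hasDerivAt_id s).const_mul (2:ℝ))
  have dS3 : HasDerivAt (fun t : ℝ => Real.sinh (3*t)) (Real.cosh (3*s) * 3) s := by
    simpa [Function.comp_def] using (Real.hasDerivAt_sinh (3*s)).comp s ((hasDerivAt_id s).const_mul (3:ℝ))
  exact hasDerivAt_congr_d (((((((((hasDerivAt_id s).const_mul ((6):ℝ)).add (((hasDerivAt_id s).const_mul ((-8):ℝ)).mul dC1)).add (((hasDerivAt_id s).const_mul ((-4):ℝ)).mul dC2)).add (dS1.const_mul (((-11)/2):ℝ))).add (((hasDerivAt_pow 2 s).const_mul ((-2):ℝ)).mul dS1)).add (dS2.const_mul ((-1):ℝ))).add (((hasDerivAt_pow 2 s).const_mul ((-2):ℝ)).mul dS2)).add (dS3.const_mul (((9)/2):ℝ))) (by push_cast [id_eq]; ring)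

lemma lam3_d (s : ℝ) : HasDerivAt (fun t : ℝ => (6) + ((-27)/2) * Real.cosh t + (-2) * t^2 * Real.cosh t + (-6) * Real.cosh (2*t) + (-4) * t^2 * Real.cosh (2*t) + ((27)/2) * Real.cosh (3*t) + (-12) * t * Real.sinh t + (-12) * t * Real.sinh (2*t))
    ((-16) * s * Real.cosh s + (-32) * s * Real.cosh (2*s) + ((-51)/2) * Real.sinh s + (-2) * s^2 * Real.sinh s + (-24) * Real.sinh (2*s) + (-8) * s^2 * Real.sinh (2*s) + ((81)/2) * Real.sinh (3*s)) s := by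
  have dC1 : HasDerivAt (fun t : ℝ => Real.cosh t) (Real.sinh s) s := Real.hasDerivAt_cosh s
  have dC2 : HasDerivAt (fun t : ℝ => Real.cosh (2*t)) (Real.sinh (2*s) * 2) s := by
    simpa [Function.comp_def] using (Real.hasDerivAt_cosh (2*s)).comp s ((hasDerivAt_id s).const_mul (2:ℝ))
  have dC3 : HasDerivAt (fun t : ℝ => Real.cosh (3*t)) (Real.sinh (3*s) * 3) s := by
    simpa [Function.comp_def] using (Real.hasDerivAt_cosh (3*s)).comp s ((hasDerivAt_id s).const_mul (3:ℝ))
  have dS1 : HasDerivAt (fun t : ℝ => Real.sinh t) (Real.cosh s) s := Real.hasDerivAt_sinh s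
  have dS2 : HasDerivAt (fun t : ℝ => Real.sinh (2*t)) (Real.cosh (2*s) * 2) s := by
    simpa [Function.comp_def] using (Real.hasDerivAt_sinh (2*s)).comp s ((hasDerivAt_id s).const_mul (2:ℝ))
  have dS3 : HasDerivAt (fun t : ℝ => Real.sinh (3*t)) (Real.cosh (3*s) * 3) s := by
    simpa [Function.comp_def] using (Real.hasDerivAt_sinh (3*s)).comp s ((hasDerivAt_id s).const_mul (3:ℝ))
  exact hasDerivAt_congr_d ((((((((hasDerivAt_const s ((6):ℝ)).add (dC1.const_mul (((-27)/2):ℝ))).add (((hasDerivAt_pow 2 s).const_mul ((-2):ℝ)).mul dC1)).add (dC2.const_mul ((-6):ℝ))).add (((hasDerivAt_pow 2 s).const_mul ((-4):ℝ)).mul dC2)).add (dC3.const_mul (((27)/2):ℝ))).add (((hasDerivAt_id s).const_mul ((-12):ℝ)).mul dS1)).add (((hasDerivAt_id s).const_mul ((-12):ℝ)).mul dS2)) (by push_cast [id_eq]; ring)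

lemma lam4_d (s : ℝ) : HasDerivAt (fun t : ℝ => (-16) * t * Real.cosh t + (-32) * t * Real.cosh (2*t) + ((-51)/2) * Real.sinh t + (-2) * t^2 * Real.sinh t + (-24) * Real.sinh (2*t) + (-8) * t^2 * Real.sinh (2*t) + ((81)/2) * Real.sinh (3*t))
    (((-83)/2) * Real.cosh s + (-2) * s^2 * Real.cosh s + (-80) * Real.cosh (2*s) + (-16) * s^2 * Real.cosh (2*s) + ((243)/2) * Real.cosh (3*s) + (-20) * s * Real.sinh s + (-80) * s * Real.sinh (2*s)) s := by
  have dC1 : HasDerivAt (fun t : ℝ => Real.cosh t) (Real.sinh s) s := Real.hasDerivAt_cosh s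
  have dC2 : HasDerivAt (fun t : ℝ => Real.cosh (2*t)) (Real.sinh (2*s) * 2) s := by
    simpa [Function.comp_def] using (Real.hasDerivAt_cosh (2*s)).comp s ((hasDerivAt_id s).const_mul (2:ℝ))
  have dC3 : HasDerivAt (fun t : ℝ => Real.cosh (3*t)) (Real.sinh (3*s) * 3) s := by
    simpa [Function.comp_def] using (Real.hasDerivAt_cosh (3*s)).comp s ((hasDerivAt_id s).const_mul (3:ℝ))
  have dS1 : HasDerivAt (fun t : ℝ => Real.sinh t) (Real.cosh s) s := Real.hasDerivAt_sinh s
  have dS2 : HasDerivAt (fun t : ℝ => Real.sinh (2*t)) (Real.cosh (2*s) * 2) s := by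
    simpa [Function.comp_def] using (Real.hasDerivAt_sinh (2*s)).comp s ((hasDerivAt_id s).const_mul (2:ℝ))
  have dS3 : HasDerivAt (fun t : ℝ => Real.sinh (3*t)) (Real.cosh (3*s) * 3) s := by
    simpa [Function.comp_def] using (Real.hasDerivAt_sinh (3*s)).comp s ((hasDerivAt_id s).const_mul (3:ℝ))
  exact hasDerivAt_congr_d (((((((((hasDerivAt_id s).const_mul ((-16):ℝ)).mul dC1).add (((hasDerivAt_id s).const_mul ((-32):ℝ)).mul dC2)).add (dS1.const_mul (((-51)/2):ℝ))).add (((hasDerivAt_pow 2 s).const_mul ((-2):ℝ)).mul dS1)).add (dS2.const_mul ((-24):ℝ))).add (((hasDerivAt_pow 2 s).const_mul ((-8):ℝ)).mul dS2)).add (dS3.const_mul (((81)/2):ℝ))) (by push_cast [id_eq]; ring)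

lemma lam5_d (s : ℝ) : HasDerivAt (fun t : ℝ => ((-83)/2) * Real.cosh t + (-2) * t^2 * Real.cosh t + (-80) * Real.cosh (2*t) + (-16) * t^2 * Real.cosh (2*t) + ((243)/2) * Real.cosh (3*t) + (-20) * t * Real.sinh t + (-80) * t * Real.sinh (2*t))
    ((-24) * s * Real.cosh s + (-192) * s * Real.cosh (2*s) + ((-123)/2) * Real.sinh s + (-2) * s^2 * Real.sinh s + (-240) * Real.sinh (2*s) + (-32) * s^2 * Real.sinh (2*s) + ((729)/2) * Real.sinh (3*s)) s := by
  have dC1 : HasDerivAt (fun t : ℝ => Real.cosh t) (Real.sinh s) s := Real.hasDerivAt_cosh s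
  have dC2 : HasDerivAt (fun t : ℝ => Real.cosh (2*t)) (Real.sinh (2*s) * 2) s := by
    simpa [Function.comp_def] using (Real.hasDerivAt_cosh (2*s)).comp s ((hasDerivAt_id s).const_mul (2:ℝ))
  have dC3 : HasDerivAt (fun t : ℝ => Real.cosh (3*t)) (Real.sinh (3*s) * 3) s := by
    simpa [Function.comp_def] using (Real.hasDerivAt_cosh (3*s)).comp s ((hasDerivAt_id s).const_mul (3:ℝ))
  have dS1 : HasDerivAt (fun t : ℝ => Real.sinh t) (Real.cosh s) s := Real.hasDerivAt_sinh s
  have dS2 : HasDerivAt (fun t : ℝ => Real.sinh (2*t)) (Real.cosh (2*s) * 2) s := by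
    simpa [Function.comp_def] using (Real.hasDerivAt_sinh (2*s)).comp s ((hasDerivAt_id s).const_mul (2:ℝ))
  have dS3 : HasDerivAt (fun t : ℝ => Real.sinh (3*t)) (Real.cosh (3*s) * 3) s := by
    simpa [Function.comp_def] using (Real.hasDerivAt_sinh (3*s)).comp s ((hasDerivAt_id s).const_mul (3:ℝ))
  exact hasDerivAt_congr_d (((((((dC1.const_mul (((-83)/2):ℝ)).add (((hasDerivAt_pow 2 s).const_mul ((-2):ℝ)).mul dC1)).add (dC2.const_mul ((-80):ℝ))).add (((hasDerivAt_pow 2 s).const_mul ((-16):ℝ)).mul dC2)).add (dC3.const_mul (((243)/2):ℝ))).add (((hasDerivAt_id s).const_mul ((-20):ℝ)).mul dS1)).add (((hasDerivAt_id s).const_mul ((-80):ℝ)).mul dS2)) (by push_cast [id_eq]; ring)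

lemma lam6_d (s : ℝ) : HasDerivAt (fun t : ℝ => (-24) * t * Real.cosh t + (-192) * t * Real.cosh (2*t) + ((-123)/2) * Real.sinh t + (-2) * t^2 * Real.sinh t + (-240) * Real.sinh (2*t) + (-32) * t^2 * Real.sinh (2*t) + ((729)/2) * Real.sinh (3*t))
    (((-171)/2) * Real.cosh s + (-2) * s^2 * Real.cosh s + (-672) * Real.cosh (2*s) + (-64) * s^2 * Real.cosh (2*s) + ((2187)/2) * Real.cosh (3*s) + (-28) * s * Real.sinh s + (-448) * s * Real.sinh (2*s)) s := by
  have dC1 : HasDerivAt (fun t : ℝ => Real.cosh t) (Real.sinh s) s := Real.hasDerivAt_cosh s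
  have dC2 : HasDerivAt (fun t : ℝ => Real.cosh (2*t)) (Real.sinh (2*s) * 2) s := by
    simpa [Function.comp_def] using (Real.hasDerivAt_cosh (2*s)).comp s ((hasDerivAt_id s).const_mul (2:ℝ))
  have dC3 : HasDerivAt (fun t : ℝ => Real.cosh (3*t)) (Real.sinh (3*s) * 3) s := by
    simpa [Function.comp_def] using (Real.hasDerivAt_cosh (3*s)).comp s ((hasDerivAt_id s).const_mul (3:ℝ))
  have dS1 : HasDerivAt (fun t : ℝ => Real.sinh t) (Real.cosh s) s := Real.hasDerivAt_sinh s
  have dS2 : HasDerivAt (fun t : ℝ => Real.sinh (2*t)) (Real.cosh (2*s) * 2) s := by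
    simpa [Function.comp_def] using (Real.hasDerivAt_sinh (2*s)).comp s ((hasDerivAt_id s).const_mul (2:ℝ))
  have dS3 : HasDerivAt (fun t : ℝ => Real.sinh (3*t)) (Real.cosh (3*s) * 3) s := by
    simpa [Function.comp_def] using (Real.hasDerivAt_sinh (3*s)).comp s ((hasDerivAt_id s).const_mul (3:ℝ))
  exact hasDerivAt_congr_d (((((((((hasDerivAt_id s).const_mul ((-24):ℝ)).mul dC1).add (((hasDerivAt_id s).const_mul ((-192):ℝ)).mul dC2)).add (dS1.const_mul (((-123)/2):ℝ))).add (((hasDerivAt_pow 2 s).const_mul ((-2):ℝ)).mul dS1)).add (dS2.const_mul ((-240):ℝ))).add (((hasDerivAt_pow 2 s).const_mul ((-32):ℝ)).mul dS2)).add (dS3.const_mul (((729)/2):ℝ))) (by push_cast [id_eq]; ring)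

lemma lam7_pos : ∀ s : ℝ, 0 < s → 0 < ((-171)/2) * Real.cosh s + (-2) * s^2 * Real.cosh s + (-672) * Real.cosh (2*s) + (-64) * s^2 * Real.cosh (2*s) + ((2187)/2) * Real.cosh (3*s) + (-28) * s * Real.sinh s + (-448) * s * Real.sinh (2*s) := by
  intro s hs
  have hh : 0 < Real.sinh s := Real.sinh_pos_iff.mpr hs
  have hc1 : (1:ℝ) ≤ Real.cosh s := Real.one_le_cosh s
  have hsh : s < Real.sinh s := by have := b1_pos s hs; linarith
  have hsq : s^2 < Real.cosh s + 1 := sq_lt_cosh_add_one s hs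
  have hpy := Real.cosh_sq_sub_sinh_sq s
  have hpy2 : Real.cosh s * Real.sinh s^2 = Real.cosh s^3 - Real.cosh s := by
    linear_combination (-(Real.cosh s)) * hpy
  have e1 : s * Real.sinh s ≤ Real.sinh s^2 := by nlinarith
  have e2 : s * (Real.sinh s * Real.cosh s) ≤ Real.sinh s^2 * Real.cosh s := by nlinarith
  have e3 : s^2 * Real.cosh s ≤ (Real.cosh s + 1) * Real.cosh s := by nlinarith
  have e4 : s^2 * Real.cosh s^2 ≤ (Real.cosh s + 1) * Real.cosh s^2 := by nlinarith
  have e5 : s^2 * Real.sinh s^2 ≤ (Real.cosh s + 1) * Real.sinh s^2 := by nlinarith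
  have cube : 0 < 3350 * Real.cosh s^3 - 1502 * Real.cosh s^2 - 2472 * Real.cosh s + 700 := by
    nlinarith [sq_nonneg (Real.cosh s - 1), mul_nonneg (mul_nonneg (sub_nonneg.2 hc1) (sub_nonneg.2 hc1)) (sub_nonneg.2 hc1)]
  rw [Real.cosh_three_mul, Real.cosh_two_mul, Real.sinh_two_mul]
  nlinarith [e1, e2, e3, e4, e5, cube, hpy, hpy2, sq_nonneg s]

lemma lam6_pos : ∀ s : ℝ, 0 < s → 0 < (-24) * s * Real.cosh s + (-192) * s * Real.cosh (2*s) + ((-123)/2) * Real.sinh s + (-2) * s^2 * Real.sinh s + (-240) * Real.sinh (2*s) + (-32) * s^2 * Real.sinh (2*s) + ((729)/2) * Real.sinh (3*s) := by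
  refine pos_aux lam6_d ?_ lam7_pos
  norm_num

lemma lam5_pos : ∀ s : ℝ, 0 < s → 0 < ((-83)/2) * Real.cosh s + (-2) * s^2 * Real.cosh s + (-80) * Real.cosh (2*s) + (-16) * s^2 * Real.cosh (2*s) + ((243)/2) * Real.cosh (3*s) + (-20) * s * Real.sinh s + (-80) * s * Real.sinh (2*s) := by
  refine pos_aux lam5_d ?_ lam6_pos
  norm_num

lemma lam4_pos : ∀ s : ℝ, 0 < s → 0 < (-16) * s * Real.cosh s + (-32) * s * Real.cosh (2*s) + ((-51)/2) * Real.sinh s + (-2) * s^2 * Real.sinh s + (-24) * Real.sinh (2*s) + (-8) * s^2 * Real.sinh (2*s) + ((81)/2) * Real.sinh (3*s) := by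
  refine pos_aux lam4_d ?_ lam5_pos
  norm_num

lemma lam3_pos : ∀ s : ℝ, 0 < s → 0 < (6) + ((-27)/2) * Real.cosh s + (-2) * s^2 * Real.cosh s + (-6) * Real.cosh (2*s) + (-4) * s^2 * Real.cosh (2*s) + ((27)/2) * Real.cosh (3*s) + (-12) * s * Real.sinh s + (-12) * s * Real.sinh (2*s) := by
  refine pos_aux lam3_d ?_ lam4_pos
  norm_num

lemma lam2_pos : ∀ s : ℝ, 0 < s → 0 < (6) * s + (-8) * s * Real.cosh s + (-4) * s * Real.cosh (2*s) + ((-11)/2) * Real.sinh s + (-2) * s^2 * Real.sinh s + (-1) * Real.sinh (2*s) + (-2) * s^2 * Real.sinh (2*s) + ((9)/2) * Real.sinh (3*s) := by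
  refine pos_aux lam2_d ?_ lam3_pos
  norm_num

lemma lam1_pos : ∀ s : ℝ, 0 < s → 0 < (3) * s^2 + ((-3)/2) * Real.cosh s + (-2) * s^2 * Real.cosh s + (-1) * s^2 * Real.cosh (2*s) + ((3)/2) * Real.cosh (3*s) + (-4) * s * Real.sinh s + (-1) * s * Real.sinh (2*s) := by
  refine pos_aux lam1_d ?_ lam2_pos
  norm_num

lemma lam0_pos : ∀ s : ℝ, 0 < s → 0 < (1) * s^3 + ((-3)/2) * Real.sinh s + (-2) * s^2 * Real.sinh s + ((-1)/2) * s^2 * Real.sinh (2*s) + ((1)/2) * Real.sinh (3*s) := by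
  refine pos_aux lam0_d ?_ lam1_pos
  norm_num

lemma the0_d (s : ℝ) : HasDerivAt (fun t : ℝ => (1) * t^3 + (1) * t^3 * Real.cosh t + ((-3)/4) * Real.sinh t + (-2) * t^2 * Real.sinh t + ((-1)/2) * t^2 * Real.sinh (2*t) + ((1)/4) * Real.sinh (3*t))
    ((3) * s^2 + ((-3)/4) * Real.cosh s + (1) * s^2 * Real.cosh s + (-1) * s^2 * Real.cosh (2*s) + ((3)/4) * Real.cosh (3*s) + (-4) * s * Real.sinh s + (1) * s^3 * Real.sinh s + (-1) * s * Real.sinh (2*s)) s := by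
  have dC1 : HasDerivAt (fun t : ℝ => Real.cosh t) (Real.sinh s) s := Real.hasDerivAt_cosh s
  have dC2 : HasDerivAt (fun t : ℝ => Real.cosh (2*t)) (Real.sinh (2*s) * 2) s := by
    simpa [Function.comp_def] using (Real.hasDerivAt_cosh (2*s)).comp s ((hasDerivAt_id s).const_mul (2:ℝ))
  have dC3 : HasDerivAt (fun t : ℝ => Real.cosh (3*t)) (Real.sinh (3*s) * 3) s := by
    simpa [Function.comp_def] using (Real.hasDerivAt_cosh (3*s)).comp s ((hasDerivAt_id s).const_mul (3:ℝ))
  have dS1 : HasDerivAt (fun t : ℝ => Real.sinh t) (Real.cosh s) s := Real.hasDerivAt_sinh s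
  have dS2 : HasDerivAt (fun t : ℝ => Real.sinh (2*t)) (Real.cosh (2*s) * 2) s := by
    simpa [Function.comp_def] using (Real.hasDerivAt_sinh (2*s)).comp s ((hasDerivAt_id s).const_mul (2:ℝ))
  have dS3 : HasDerivAt (fun t : ℝ => Real.sinh (3*t)) (Real.cosh (3*s) * 3) s := by
    simpa [Function.comp_def] using (Real.hasDerivAt_sinh (3*s)).comp s ((hasDerivAt_id s).const_mul (3:ℝ))
  exact hasDerivAt_congr_d (((((((hasDerivAt_pow 3 s).const_mul ((1):ℝ)).add (((hasDerivAt_pow 3 s).const_mul ((1):ℝ)).mul dC1)).add (dS1.const_mul (((-3)/4):ℝ))).add (((hasDerivAt_pow 2 s).const_mul ((-2):ℝ)).mul dS1)).add (((hasDerivAt_pow 2 s).const_mul (((-1)/2):ℝ)).mul dS2)).add (dS3.const_mul (((1)/4):ℝ))) (by push_cast [id_eq]; ring)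

lemma the1_d (s : ℝ) : HasDerivAt (fun t : ℝ => (3) * t^2 + ((-3)/4) * Real.cosh t + (1) * t^2 * Real.cosh t + (-1) * t^2 * Real.cosh (2*t) + ((3)/4) * Real.cosh (3*t) + (-4) * t * Real.sinh t + (1) * t^3 * Real.sinh t + (-1) * t * Real.sinh (2*t))
    ((6) * s + (-2) * s * Real.cosh s + (1) * s^3 * Real.cosh s + (-4) * s * Real.cosh (2*s) + ((-19)/4) * Real.sinh s + (4) * s^2 * Real.sinh s + (-1) * Real.sinh (2*s) + (-2) * s^2 * Real.sinh (2*s) + ((9)/4) * Real.sinh (3*s)) s := by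
  have dC1 : HasDerivAt (fun t : ℝ => Real.cosh t) (Real.sinh s) s := Real.hasDerivAt_cosh s
  have dC2 : HasDerivAt (fun t : ℝ => Real.cosh (2*t)) (Real.sinh (2*s) * 2) s := by
    simpa [Function.comp_def] using (Real.hasDerivAt_cosh (2*s)).comp s ((hasDerivAt_id s).const_mul (2:ℝ))
  have dC3 : HasDerivAt (fun t : ℝ => Real.cosh (3*t)) (Real.sinh (3*s) * 3) s := by
    simpa [Function.comp_def] using (Real.hasDerivAt_cosh (3*s)).comp s ((hasDerivAt_id s).const_mul (3:ℝ))
  have dS1 : HasDerivAt (fun t : ℝ => Real.sinh t) (Real.cosh s) s := Real.hasDerivAt_sinh s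
  have dS2 : HasDerivAt (fun t : ℝ => Real.sinh (2*t)) (Real.cosh (2*s) * 2) s := by
    simpa [Function.comp_def] using (Real.hasDerivAt_sinh (2*s)).comp s ((hasDerivAt_id s).const_mul (2:ℝ))
  have dS3 : HasDerivAt (fun t : ℝ => Real.sinh (3*t)) (Real.cosh (3*s) * 3) s := by
    simpa [Function.comp_def] using (Real.hasDerivAt_sinh (3*s)).comp s ((hasDerivAt_id s).const_mul (3:ℝ))
  exact hasDerivAt_congr_d (((((((((hasDerivAt_pow 2 s).const_mul ((3):ℝ)).add (dC1.const_mul (((-3)/4):ℝ))).add (((hasDerivAt_pow 2 s).const_mul ((1):ℝ)).mul dC1)).add (((hasDerivAt_pow 2 s).const_mul ((-1):ℝ)).mul dC2)).add (dC3.const_mul (((3)/4):ℝ))).add (((hasDerivAt_id s).const_mul ((-4):ℝ)).mul dS1)).add (((hasDerivAt_pow 3 s).const_mul ((1):ℝ)).mul dS1)).add (((hasDerivAt_id s).const_mul ((-1):ℝ)).mul dS2)) (by push_cast [id_eq]; ring)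

lemma the2_d (s : ℝ) : HasDerivAt (fun t : ℝ => (6) * t + (-2) * t * Real.cosh t + (1) * t^3 * Real.cosh t + (-4) * t * Real.cosh (2*t) + ((-19)/4) * Real.sinh t + (4) * t^2 * Real.sinh t + (-1) * Real.sinh (2*t) + (-2) * t^2 * Real.sinh (2*t) + ((9)/4) * Real.sinh (3*t))
    ((6) + ((-27)/4) * Real.cosh s + (7) * s^2 * Real.cosh s + (-6) * Real.cosh (2*s) + (-4) * s^2 * Real.cosh (2*s) + ((27)/4) * Real.cosh (3*s) + (6) * s * Real.sinh s + (1) * s^3 * Real.sinh s + (-12) * s * Real.sinh (2*s)) s := by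
  have dC1 : HasDerivAt (fun t : ℝ => Real.cosh t) (Real.sinh s) s := Real.hasDerivAt_cosh s
  have dC2 : HasDerivAt (fun t : ℝ => Real.cosh (2*t)) (Real.sinh (2*s) * 2) s := by
    simpa [Function.comp_def] using (Real.hasDerivAt_cosh (2*s)).comp s ((hasDerivAt_id s).const_mul (2:ℝ))
  have dC3 : HasDerivAt (fun t : ℝ => Real.cosh (3*t)) (Real.sinh (3*s) * 3) s := by
    simpa [Function.comp_def] using (Real.hasDerivAt_cosh (3*s)).comp s ((hasDerivAt_id s).const_mul (3:ℝ))
  have dS1 : HasDerivAt (fun t : ℝ => Real.sinh t) (Real.cosh s) s := Real.hasDerivAt_sinh s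
  have dS2 : HasDerivAt (fun t : ℝ => Real.sinh (2*t)) (Real.cosh (2*s) * 2) s := by
    simpa [Function.comp_def] using (Real.hasDerivAt_sinh (2*s)).comp s ((hasDerivAt_id s).const_mul (2:ℝ))
  have dS3 : HasDerivAt (fun t : ℝ => Real.sinh (3*t)) (Real.cosh (3*s) * 3) s := by
    simpa [Function.comp_def] using (Real.hasDerivAt_sinh (3*s)).comp s ((hasDerivAt_id s).const_mul (3:ℝ))
  exact hasDerivAt_congr_d ((((((((((hasDerivAt_id s).const_mul ((6):ℝ)).add (((hasDerivAt_id s).const_mul ((-2):ℝ)).mul dC1)).add (((hasDerivAt_pow 3 s).const_mul ((1):ℝ)).mul dC1)).add (((hasDerivAt_id s).const_mul ((-4):ℝ)).mul dC2)).add (dS1.const_mul (((-19)/4):ℝ))).add (((hasDerivAt_pow 2 s).const_mul ((4):ℝ)).mul dS1)).add (dS2.const_mul ((-1):ℝ))).add (((hasDerivAt_pow 2 s).const_mul ((-2):ℝ)).mul dS2)).add (dS3.const_mul (((9)/4):ℝ))) (by push_cast [id_eq]; ring)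

lemma the3_d (s : ℝ) : HasDerivAt (fun t : ℝ => (6) + ((-27)/4) * Real.cosh t + (7) * t^2 * Real.cosh t + (-6) * Real.cosh (2*t) + (-4) * t^2 * Real.cosh (2*t) + ((27)/4) * Real.cosh (3*t) + (6) * t * Real.sinh t + (1) * t^3 * Real.sinh t + (-12) * t * Real.sinh (2*t))
    ((20) * s * Real.cosh s + (1) * s^3 * Real.cosh s + (-32) * s * Real.cosh (2*s) + ((-3)/4) * Real.sinh s + (10) * s^2 * Real.sinh s + (-24) * Real.sinh (2*s) + (-8) * s^2 * Real.sinh (2*s) + ((81)/4) * Real.sinh (3*s)) s := by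
  have dC1 : HasDerivAt (fun t : ℝ => Real.cosh t) (Real.sinh s) s := Real.hasDerivAt_cosh s
  have dC2 : HasDerivAt (fun t : ℝ => Real.cosh (2*t)) (Real.sinh (2*s) * 2) s := by
    simpa [Function.comp_def] using (Real.hasDerivAt_cosh (2*s)).comp s ((hasDerivAt_id s).const_mul (2:ℝ))
  have dC3 : HasDerivAt (fun t : ℝ => Real.cosh (3*t)) (Real.sinh (3*s) * 3) s := by
    simpa [Function.comp_def] using (Real.hasDerivAt_cosh (3*s)).comp s ((hasDerivAt_id s).const_mul (3:ℝ))
  have dS1 : HasDerivAt (fun t : ℝ => Real.sinh t) (Real.cosh s) s := Real.hasDerivAt_sinh s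
  have dS2 : HasDerivAt (fun t : ℝ => Real.sinh (2*t)) (Real.cosh (2*s) * 2) s := by
    simpa [Function.comp_def] using (Real.hasDerivAt_sinh (2*s)).comp s ((hasDerivAt_id s).const_mul (2:ℝ))
  have dS3 : HasDerivAt (fun t : ℝ => Real.sinh (3*t)) (Real.cosh (3*s) * 3) s := by
    simpa [Function.comp_def] using (Real.hasDerivAt_sinh (3*s)).comp s ((hasDerivAt_id s).const_mul (3:ℝ))
  exact hasDerivAt_congr_d (((((((((hasDerivAt_const s ((6):ℝ)).add (dC1.const_mul (((-27)/4):ℝ))).add (((hasDerivAt_pow 2 s).const_mul ((7):ℝ)).mul dC1)).add (dC2.const_mul ((-6):ℝ))).add (((hasDerivAt_pow 2 s).const_mul ((-4):ℝ)).mul dC2)).add (dC3.const_mul (((27)/4):ℝ))).add (((hasDerivAt_id s).const_mul ((6):ℝ)).mul dS1)).add (((hasDerivAt_pow 3 s).const_mul ((1):ℝ)).mul dS1)).add (((hasDerivAt_id s).const_mul ((-12):ℝ)).mul dS2)) (by push_cast [id_eq]; ring)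

lemma the4_d (s : ℝ) : HasDerivAt (fun t : ℝ => (20) * t * Real.cosh t + (1) * t^3 * Real.cosh t + (-32) * t * Real.cosh (2*t) + ((-3)/4) * Real.sinh t + (10) * t^2 * Real.sinh t + (-24) * Real.sinh (2*t) + (-8) * t^2 * Real.sinh (2*t) + ((81)/4) * Real.sinh (3*t))
    (((77)/4) * Real.cosh s + (13) * s^2 * Real.cosh s + (-80) * Real.cosh (2*s) + (-16) * s^2 * Real.cosh (2*s) + ((243)/4) * Real.cosh (3*s) + (40) * s * Real.sinh s + (1) * s^3 * Real.sinh s + (-80) * s * Real.sinh (2*s)) s := by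
  have dC1 : HasDerivAt (fun t : ℝ => Real.cosh t) (Real.sinh s) s := Real.hasDerivAt_cosh s
  have dC2 : HasDerivAt (fun t : ℝ => Real.cosh (2*t)) (Real.sinh (2*s) * 2) s := by
    simpa [Function.comp_def] using (Real.hasDerivAt_cosh (2*s)).comp s ((hasDerivAt_id s).const_mul (2:ℝ))
  have dC3 : HasDerivAt (fun t : ℝ => Real.cosh (3*t)) (Real.sinh (3*s) * 3) s := by
    simpa [Function.comp_def] using (Real.hasDerivAt_cosh (3*s)).comp s ((hasDerivAt_id s).const_mul (3:ℝ))
  have dS1 : HasDerivAt (fun t : ℝ => Real.sinh t) (Real.cosh s) s := Real.hasDerivAt_sinh s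
  have dS2 : HasDerivAt (fun t : ℝ => Real.sinh (2*t)) (Real.cosh (2*s) * 2) s := by
    simpa [Function.comp_def] using (Real.hasDerivAt_sinh (2*s)).comp s ((hasDerivAt_id s).const_mul (2:ℝ))
  have dS3 : HasDerivAt (fun t : ℝ => Real.sinh (3*t)) (Real.cosh (3*s) * 3) s := by
    simpa [Function.comp_def] using (Real.hasDerivAt_sinh (3*s)).comp s ((hasDerivAt_id s).const_mul (3:ℝ))
  exact hasDerivAt_congr_d ((((((((((hasDerivAt_id s).const_mul ((20):ℝ)).mul dC1).add (((hasDerivAt_pow 3 s).const_mul ((1):ℝ)).mul dC1)).add (((hasDerivAt_id s).const_mul ((-32):ℝ)).mul dC2)).add (dS1.const_mul (((-3)/4):ℝ))).add (((hasDerivAt_pow 2 s).const_mul ((10):ℝ)).mul dS1)).add (dS2.const_mul ((-24):ℝ))).add (((hasDerivAt_pow 2 s).const_mul ((-8):ℝ)).mul dS2)).add (dS3.const_mul (((81)/4):ℝ))) (by push_cast [id_eq]; ring)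

lemma the5_d (s : ℝ) : HasDerivAt (fun t : ℝ => ((77)/4) * Real.cosh t + (13) * t^2 * Real.cosh t + (-80) * Real.cosh (2*t) + (-16) * t^2 * Real.cosh (2*t) + ((243)/4) * Real.cosh (3*t) + (40) * t * Real.sinh t + (1) * t^3 * Real.sinh t + (-80) * t * Real.sinh (2*t))
    ((66) * s * Real.cosh s + (1) * s^3 * Real.cosh s + (-192) * s * Real.cosh (2*s) + ((237)/4) * Real.sinh s + (16) * s^2 * Real.sinh s + (-240) * Real.sinh (2*s) + (-32) * s^2 * Real.sinh (2*s) + ((729)/4) * Real.sinh (3*s)) s := by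
  have dC1 : HasDerivAt (fun t : ℝ => Real.cosh t) (Real.sinh s) s := Real.hasDerivAt_cosh s
  have dC2 : HasDerivAt (fun t : ℝ => Real.cosh (2*t)) (Real.sinh (2*s) * 2) s := by
    simpa [Function.comp_def] using (Real.hasDerivAt_cosh (2*s)).comp s ((hasDerivAt_id s).const_mul (2:ℝ))
  have dC3 : HasDerivAt (fun t : ℝ => Real.cosh (3*t)) (Real.sinh (3*s) * 3) s := by
    simpa [Function.comp_def] using (Real.hasDerivAt_cosh (3*s)).comp s ((hasDerivAt_id s).const_mul (3:ℝ))
  have dS1 : HasDerivAt (fun t : ℝ => Real.sinh t) (Real.cosh s) s := Real.hasDerivAt_sinh s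
  have dS2 : HasDerivAt (fun t : ℝ => Real.sinh (2*t)) (Real.cosh (2*s) * 2) s := by
    simpa [Function.comp_def] using (Real.hasDerivAt_sinh (2*s)).comp s ((hasDerivAt_id s).const_mul (2:ℝ))
  have dS3 : HasDerivAt (fun t : ℝ => Real.sinh (3*t)) (Real.cosh (3*s) * 3) s := by
    simpa [Function.comp_def] using (Real.hasDerivAt_sinh (3*s)).comp s ((hasDerivAt_id s).const_mul (3:ℝ))
  exact hasDerivAt_congr_d ((((((((dC1.const_mul (((77)/4):ℝ)).add (((hasDerivAt_pow 2 s).const_mul ((13):ℝ)).mul dC1)).add (dC2.const_mul ((-80):ℝ))).add (((hasDerivAt_pow 2 s).const_mul ((-16):ℝ)).mul dC2)).add (dC3.const_mul (((243)/4):ℝ))).add (((hasDerivAt_id s).const_mul ((40):ℝ)).mul dS1)).add (((hasDerivAt_pow 3 s).const_mul ((1):ℝ)).mul dS1)).add (((hasDerivAt_id s).const_mul ((-80):ℝ)).mul dS2)) (by push_cast [id_eq]; ring)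

lemma the6_d (s : ℝ) : HasDerivAt (fun t : ℝ => (66) * t * Real.cosh t + (1) * t^3 * Real.cosh t + (-192) * t * Real.cosh (2*t) + ((237)/4) * Real.sinh t + (16) * t^2 * Real.sinh t + (-240) * Real.sinh (2*t) + (-32) * t^2 * Real.sinh (2*t) + ((729)/4) * Real.sinh (3*t))
    (((501)/4) * Real.cosh s + (19) * s^2 * Real.cosh s + (-672) * Real.cosh (2*s) + (-64) * s^2 * Real.cosh (2*s) + ((2187)/4) * Real.cosh (3*s) + (98) * s * Real.sinh s + (1) * s^3 * Real.sinh s + (-448) * s * Real.sinh (2*s)) s := by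
  have dC1 : HasDerivAt (fun t : ℝ => Real.cosh t) (Real.sinh s) s := Real.hasDerivAt_cosh s
  have dC2 : HasDerivAt (fun t : ℝ => Real.cosh (2*t)) (Real.sinh (2*s) * 2) s := by
    simpa [Function.comp_def] using (Real.hasDerivAt_cosh (2*s)).comp s ((hasDerivAt_id s).const_mul (2:ℝ))
  have dC3 : HasDerivAt (fun t : ℝ => Real.cosh (3*t)) (Real.sinh (3*s) * 3) s := by
    simpa [Function.comp_def] using (Real.hasDerivAt_cosh (3*s)).comp s ((hasDerivAt_id s).const_mul (3:ℝ))
  have dS1 : HasDerivAt (fun t : ℝ => Real.sinh t) (Real.cosh s) s := Real.hasDerivAt_sinh s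
  have dS2 : HasDerivAt (fun t : ℝ => Real.sinh (2*t)) (Real.cosh (2*s) * 2) s := by
    simpa [Function.comp_def] using (Real.hasDerivAt_sinh (2*s)).comp s ((hasDerivAt_id s).const_mul (2:ℝ))
  have dS3 : HasDerivAt (fun t : ℝ => Real.sinh (3*t)) (Real.cosh (3*s) * 3) s := by
    simpa [Function.comp_def] using (Real.hasDerivAt_sinh (3*s)).comp s ((hasDerivAt_id s).const_mul (3:ℝ))
  exact hasDerivAt_congr_d ((((((((((hasDerivAt_id s).const_mul ((66):ℝ)).mul dC1).add (((hasDerivAt_pow 3 s).const_mul ((1):ℝ)).mul dC1)).add (((hasDerivAt_id s).const_mul ((-192):ℝ)).mul dC2)).add (dS1.const_mul (((237)/4):ℝ))).add (((hasDerivAt_pow 2 s).const_mul ((16):ℝ)).mul dS1)).add (dS2.const_mul ((-240):ℝ))).add (((hasDerivAt_pow 2 s).const_mul ((-32):ℝ)).mul dS2)).add (dS3.const_mul (((729)/4):ℝ))) (by push_cast [id_eq]; ring)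

lemma the7_d (s : ℝ) : HasDerivAt (fun t : ℝ => ((501)/4) * Real.cosh t + (19) * t^2 * Real.cosh t + (-672) * Real.cosh (2*t) + (-64) * t^2 * Real.cosh (2*t) + ((2187)/4) * Real.cosh (3*t) + (98) * t * Real.sinh t + (1) * t^3 * Real.sinh t + (-448) * t * Real.sinh (2*t))
    ((136) * s * Real.cosh s + (1) * s^3 * Real.cosh s + (-1024) * s * Real.cosh (2*s) + ((893)/4) * Real.sinh s + (22) * s^2 * Real.sinh s + (-1792) * Real.sinh (2*s) + (-128) * s^2 * Real.sinh (2*s) + ((6561)/4) * Real.sinh (3*s)) s := by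
  have dC1 : HasDerivAt (fun t : ℝ => Real.cosh t) (Real.sinh s) s := Real.hasDerivAt_cosh s
  have dC2 : HasDerivAt (fun t : ℝ => Real.cosh (2*t)) (Real.sinh (2*s) * 2) s := by
    simpa [Function.comp_def] using (Real.hasDerivAt_cosh (2*s)).comp s ((hasDerivAt_id s).const_mul (2:ℝ))
  have dC3 : HasDerivAt (fun t : ℝ => Real.cosh (3*t)) (Real.sinh (3*s) * 3) s := by
    simpa [Function.comp_def] using (Real.hasDerivAt_cosh (3*s)).comp s ((hasDerivAt_id s).const_mul (3:ℝ))
  have dS1 : HasDerivAt (fun t : ℝ => Real.sinh t) (Real.cosh s) s := Real.hasDerivAt_sinh s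
  have dS2 : HasDerivAt (fun t : ℝ => Real.sinh (2*t)) (Real.cosh (2*s) * 2) s := by
    simpa [Function.comp_def] using (Real.hasDerivAt_sinh (2*s)).comp s ((hasDerivAt_id s).const_mul (2:ℝ))
  have dS3 : HasDerivAt (fun t : ℝ => Real.sinh (3*t)) (Real.cosh (3*s) * 3) s := by
    simpa [Function.comp_def] using (Real.hasDerivAt_sinh (3*s)).comp s ((hasDerivAt_id s).const_mul (3:ℝ))
  exact hasDerivAt_congr_d ((((((((dC1.const_mul (((501)/4):ℝ)).add (((hasDerivAt_pow 2 s).const_mul ((19):ℝ)).mul dC1)).add (dC2.const_mul ((-672):ℝ))).add (((hasDerivAt_pow 2 s).const_mul ((-64):ℝ)).mul dC2)).add (dC3.const_mul (((2187)/4):ℝ))).add (((hasDerivAt_id s).const_mul ((98):ℝ)).mul dS1)).add (((hasDerivAt_pow 3 s).const_mul ((1):ℝ)).mul dS1)).add (((hasDerivAt_id s).const_mul ((-448):ℝ)).mul dS2)) (by push_cast [id_eq]; ring)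

lemma the8_pos : ∀ s : ℝ, 0 < s → 0 < (136) * s * Real.cosh s + (1) * s^3 * Real.cosh s + (-1024) * s * Real.cosh (2*s) + ((893)/4) * Real.sinh s + (22) * s^2 * Real.sinh s + (-1792) * Real.sinh (2*s) + (-128) * s^2 * Real.sinh (2*s) + ((6561)/4) * Real.sinh (3*s) := by
  intro s hs
  have hh : 0 < Real.sinh s := Real.sinh_pos_iff.mpr hs
  have hc1 : (1:ℝ) ≤ Real.cosh s := Real.one_le_cosh s
  have hsh : s < Real.sinh s := by have := b1_pos s hs; linarith
  have hpy := Real.cosh_sq_sub_sinh_sq s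
  rw [Real.sinh_three_mul, Real.sinh_two_mul, Real.cosh_two_mul]
  rcases le_or_gt s 1 with hs1 | hs1
  · -- small case: 0 < s ≤ 1
    have hhl : s + s^3/6 ≤ Real.sinh s := by have := b4_pos s hs; linarith
    have hhu : Real.sinh s ≤ s + s^3/6 + (1/75) * s^5 := by have := u6 s hs.le hs1; linarith
    have hcl : 1 + s^2/2 ≤ Real.cosh s := by have := b3_pos s hs; linarith
    have hcu : Real.cosh s ≤ 1 + s^2/2 + s^4/24 + (1/450) * s^6 := by
      have := u7 s hs.le hs1; linarith
    have hhp : (0:ℝ) ≤ s + s^3/6 := by positivity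
    have hcp : (0:ℝ) ≤ Real.cosh s := by linarith
    have hhu0 : (0:ℝ) ≤ Real.sinh s := hh.le
    -- product bounds
    have F2 : (s + s^3/6)^3 ≤ Real.sinh s^3 := by
      exact pow_le_pow_left₀ hhp hhl 3
    have F3 : Real.sinh s * Real.cosh s ≤ (s + s^3/6 + (1/75) * s^5) * (1 + s^2/2 + s^4/24 + (1/450) * s^6) := by
      apply mul_le_mul hhu hcu hcp (by positivity)
    have F4 : s^2 * (Real.sinh s * Real.cosh s) ≤ s^2 * ((s + s^3/6 + (1/75) * s^5) * (1 + s^2/2 + s^4/24 + (1/450) * s^6)) :=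
      mul_le_mul_of_nonneg_left F3 (sq_nonneg s)
    have F5 : s * 1 ≤ s * Real.cosh s := mul_le_mul_of_nonneg_left hc1 hs.le
    have F6 : s^3 * 1 ≤ s^3 * Real.cosh s := mul_le_mul_of_nonneg_left hc1 (by positivity)
    have F7 : s * Real.cosh s^2 ≤ s * (1 + s^2/2 + s^4/24 + (1/450) * s^6)^2 := by
      apply mul_le_mul_of_nonneg_left _ hs.le
      exact pow_le_pow_left₀ hcp hcu 2
    have F8 : s * Real.sinh s^2 ≤ s * (s + s^3/6 + (1/75) * s^5)^2 := by
      apply mul_le_mul_of_nonneg_left _ hs.le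
      exact pow_le_pow_left₀ hhu0 hhu 2
    have F9 : (0:ℝ) ≤ s^2 * Real.sinh s := by positivity
    have hQ : 0 < 672 * s + 2726 * s^3 + (96569/50) * s^5 + (316459/900) * s^7 + (77753/5400) * s^9
        + (-12064/16875) * s^11 + (-128/10125) * s^13 := by
      have h11 : s^11 ≤ s := by
        calc s^11 = s * s^10 := by ring
        _ ≤ s * 1 := by
            apply mul_le_mul_of_nonneg_left _ hs.le
            exact pow_le_one₀ hs.le hs1
        _ = s := by ring
      have h13 : s^13 ≤ s := by
        calc s^13 = s * s^12 := by ring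
        _ ≤ s * 1 := by
            apply mul_le_mul_of_nonneg_left _ hs.le
            exact pow_le_one₀ hs.le hs1
        _ = s := by ring
      linarith [pow_pos hs 3, pow_pos hs 5, pow_pos hs 7, pow_pos hs 9, hs, h11, h13]
    linarith [F2, F3, F4, F5, F6, F7, F8, F9, hQ, hhl]
  · -- large case: 1 < s
    have hch : (3/2:ℝ) ≤ Real.cosh s := by
      have h1 : Real.cosh 1 ≤ Real.cosh s := by
        rw [Real.cosh_le_cosh, abs_one, abs_of_nonneg hs.le]; exact hs1.le
      linarith [cosh_one_ge]
    have hsq : s^2 < Real.cosh s + 1 := sq_lt_cosh_add_one s hs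
    have hpy3 : Real.sinh s^3 = Real.sinh s * Real.cosh s^2 - Real.sinh s := by
      linear_combination (-(Real.sinh s)) * hpy
    have G1 : s * Real.cosh s^2 ≤ Real.sinh s * Real.cosh s^2 := by
      apply mul_le_mul_of_nonneg_right hsh.le (by positivity)
    have G2 : s * Real.sinh s^2 ≤ Real.sinh s * Real.sinh s^2 := by
      apply mul_le_mul_of_nonneg_right hsh.le (by positivity)
    have G3 : s^2 * (Real.sinh s * Real.cosh s) ≤ (Real.cosh s + 1) * (Real.sinh s * Real.cosh s) := by
      apply mul_le_mul_of_nonneg_right hsq.le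
      positivity
    have q : 0 < 4257 * Real.cosh s^2 - 3840 * Real.cosh s - 393 := by
      nlinarith [sq_nonneg (Real.cosh s - 3/2)]
    nlinarith [G1, G2, G3, q, hpy3, hpy, mul_pos hh (sub_pos.2 (lt_of_lt_of_le (by norm_num : (1:ℝ) < 3/2) hch)), hh, mul_le_mul_of_nonneg_left q.le hh.le]

lemma the7_pos : ∀ s : ℝ, 0 < s → 0 < ((501)/4) * Real.cosh s + (19) * s^2 * Real.cosh s + (-672) * Real.cosh (2*s) + (-64) * s^2 * Real.cosh (2*s) + ((2187)/4) * Real.cosh (3*s) + (98) * s * Real.sinh s + (1) * s^3 * Real.sinh s + (-448) * s * Real.sinh (2*s) := by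
  refine pos_aux the7_d ?_ the8_pos
  norm_num

lemma the6_pos : ∀ s : ℝ, 0 < s → 0 < (66) * s * Real.cosh s + (1) * s^3 * Real.cosh s + (-192) * s * Real.cosh (2*s) + ((237)/4) * Real.sinh s + (16) * s^2 * Real.sinh s + (-240) * Real.sinh (2*s) + (-32) * s^2 * Real.sinh (2*s) + ((729)/4) * Real.sinh (3*s) := by
  refine pos_aux the6_d ?_ the7_pos
  norm_num

lemma the5_pos : ∀ s : ℝ, 0 < s → 0 < ((77)/4) * Real.cosh s + (13) * s^2 * Real.cosh s + (-80) * Real.cosh (2*s) + (-16) * s^2 * Real.cosh (2*s) + ((243)/4) * Real.cosh (3*s) + (40) * s * Real.sinh s + (1) * s^3 * Real.sinh s + (-80) * s * Real.sinh (2*s) := by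
  refine pos_aux the5_d ?_ the6_pos
  norm_num

lemma the4_pos : ∀ s : ℝ, 0 < s → 0 < (20) * s * Real.cosh s + (1) * s^3 * Real.cosh s + (-32) * s * Real.cosh (2*s) + ((-3)/4) * Real.sinh s + (10) * s^2 * Real.sinh s + (-24) * Real.sinh (2*s) + (-8) * s^2 * Real.sinh (2*s) + ((81)/4) * Real.sinh (3*s) := by
  refine pos_aux the4_d ?_ the5_pos
  norm_num

lemma the3_pos : ∀ s : ℝ, 0 < s → 0 < (6) + ((-27)/4) * Real.cosh s + (7) * s^2 * Real.cosh s + (-6) * Real.cosh (2*s) + (-4) * s^2 * Real.cosh (2*s) + ((27)/4) * Real.cosh (3*s) + (6) * s * Real.sinh s + (1) * s^3 * Real.sinh s + (-12) * s * Real.sinh (2*s) := by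
  refine pos_aux the3_d ?_ the4_pos
  norm_num

lemma the2_pos : ∀ s : ℝ, 0 < s → 0 < (6) * s + (-2) * s * Real.cosh s + (1) * s^3 * Real.cosh s + (-4) * s * Real.cosh (2*s) + ((-19)/4) * Real.sinh s + (4) * s^2 * Real.sinh s + (-1) * Real.sinh (2*s) + (-2) * s^2 * Real.sinh (2*s) + ((9)/4) * Real.sinh (3*s) := by
  refine pos_aux the2_d ?_ the3_pos
  norm_num

lemma the1_pos : ∀ s : ℝ, 0 < s → 0 < (3) * s^2 + ((-3)/4) * Real.cosh s + (1) * s^2 * Real.cosh s + (-1) * s^2 * Real.cosh (2*s) + ((3)/4) * Real.cosh (3*s) + (-4) * s * Real.sinh s + (1) * s^3 * Real.sinh s + (-1) * s * Real.sinh (2*s) := by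
  refine pos_aux the1_d ?_ the2_pos
  norm_num

lemma the0_pos : ∀ s : ℝ, 0 < s → 0 < (1) * s^3 + (1) * s^3 * Real.cosh s + ((-3)/4) * Real.sinh s + (-2) * s^2 * Real.sinh s + ((-1)/2) * s^2 * Real.sinh (2*s) + ((1)/4) * Real.sinh (3*s) := by
  refine pos_aux the0_d ?_ the1_pos
  norm_num

lemma Lam_pos (s : ℝ) (hs : 0 < s) :
    0 < 2*Real.sinh s^3 - (Real.cosh s + 2)*Real.sinh s*s^2 + s^3 := by
  have h0 := lam0_pos s hs
  have h3 := Real.sinh_three_mul s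
  have h2' : s^2*Real.sinh (2*s) = s^2*(2*Real.sinh s*Real.cosh s) := by
    rw [Real.sinh_two_mul]
  linarith [h0, h3, h2']

lemma The_pos (s : ℝ) (hs : 0 < s) :
    0 < (Real.cosh s^2 - 1)*Real.sinh s - (Real.cosh s + 2)*Real.sinh s*s^2 + (1 + Real.cosh s)*s^3 := by
  have h0 := the0_pos s hs
  have h3 := Real.sinh_three_mul s
  have h2' : s^2*Real.sinh (2*s) = s^2*(2*Real.sinh s*Real.cosh s) := by
    rw [Real.sinh_two_mul]
  have he : (Real.cosh s^2 - 1)*Real.sinh s = Real.sinh s^3 := by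
    linear_combination Real.sinh s * (Real.cosh_sq_sub_sinh_sq s)
  linarith [h0, h3, h2', he]

theorem pos_aux_Ioi {f f' : ℝ → ℝ} (hder : ∀ s, 0 < s → HasDerivAt f (f' s) s)
    (hlim : Filter.Tendsto f (nhdsWithin 0 (Set.Ioi 0)) (nhds 0))
    (hpos : ∀ s, 0 < s → 0 < f' s) : ∀ s, 0 < s → 0 < f s := by
  intro s hs
  have hmono : StrictMonoOn f (Set.Ioi (0:ℝ)) := by
    apply strictMonoOn_of_deriv_pos (convex_Ioi 0)
    · exact fun x hx => (hder x hx).continuousAt.continuousWithinAt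
    · intro x hx
      rw [interior_Ioi] at hx
      rw [(hder x hx).deriv]; exact hpos x hx
  have h1 : 0 ≤ f (s/2) := by
    refine le_of_tendsto hlim ?_
    filter_upwards [Ioo_mem_nhdsGT_of_mem (Set.left_mem_Ico.2 (half_pos hs))] with t ht
    exact (hmono (Set.mem_Ioi.2 ht.1) (Set.mem_Ioi.2 (half_pos hs)) ht.2).le
  have h2 : f (s/2) < f s := hmono (Set.mem_Ioi.2 (by positivity)) (Set.mem_Ioi.2 hs) (by linarith)
  linarith

lemma sinh_div_lim : Filter.Tendsto (fun t : ℝ => Real.sinh t / t)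
    (nhdsWithin 0 (Set.Ioi 0)) (nhds 1) := by
  have h := Real.hasDerivAt_sinh 0
  rw [hasDerivAt_iff_tendsto_slope] at h
  rw [Real.cosh_zero] at h
  have h2 : Filter.Tendsto (slope Real.sinh 0) (nhdsWithin 0 (Set.Ioi 0)) (nhds 1) := by
    apply h.mono_left
    apply nhdsWithin_mono
    intro x hx
    simp only [Set.mem_compl_iff, Set.mem_singleton_iff]
    exact ne_of_gt hx
  refine h2.congr' ?_
  filter_upwards [self_mem_nhdsWithin] with t ht
  simp [slope_def_field, Real.sinh_zero]

lemma cosh_lim : Filter.Tendsto (fun t : ℝ => Real.cosh t)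
    (nhdsWithin 0 (Set.Ioi 0)) (nhds 1) := by
  have : Filter.Tendsto Real.cosh (nhds 0) (nhds 1) := by
    have := Real.continuous_cosh.tendsto 0
    rwa [Real.cosh_zero] at this
  exact this.mono_left nhdsWithin_le_nhds

lemma q_lim : Filter.Tendsto (fun t : ℝ => t * Real.cosh t / Real.sinh t)
    (nhdsWithin 0 (Set.Ioi 0)) (nhds 1) := by
  have h : Filter.Tendsto (fun t : ℝ => Real.cosh t / (Real.sinh t / t))
      (nhdsWithin 0 (Set.Ioi 0)) (nhds 1) := by
    have := cosh_lim.div sinh_div_lim one_ne_zero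
    rw [div_one] at this
    exact this
  refine h.congr' ?_
  filter_upwards [self_mem_nhdsWithin] with t ht
  have ht' : (t:ℝ) ≠ 0 := ne_of_gt ht
  field_simp

lemma psi_pos : ∀ s : ℝ, 0 < s →
    0 < s * Real.cosh s / Real.sinh s - 1 - Real.log (2 * Real.sinh s - s) + Real.log s := by
  apply pos_aux_Ioi (f' := fun s =>
    ((1 * Real.cosh s + s * Real.sinh s) * Real.sinh s - s * Real.cosh s * Real.cosh s) / Real.sinh s ^ 2
    - (2 * Real.cosh s - 1) / (2 * Real.sinh s - s) + s⁻¹)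
  · intro s hs
    have hh : 0 < Real.sinh s := Real.sinh_pos_iff.mpr hs
    have h2hs : 0 < 2 * Real.sinh s - s := by have := b1_pos s hs; linarith
    have dq : HasDerivAt (fun t : ℝ => t * Real.cosh t / Real.sinh t)
        (((1 * Real.cosh s + s * Real.sinh s) * Real.sinh s - s * Real.cosh s * Real.cosh s) / Real.sinh s ^ 2) s := by
      have H := ((hasDerivAt_id s).mul (Real.hasDerivAt_cosh s)).div (Real.hasDerivAt_sinh s) (ne_of_gt hh)
      exact hasDerivAt_congr_d H (by simp only [id_eq, Pi.mul_apply])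
    have dlog1 : HasDerivAt (fun t : ℝ => Real.log (2 * Real.sinh t - t))
        ((2 * Real.cosh s - 1) / (2 * Real.sinh s - s)) s := by
      have hinner : HasDerivAt (fun t : ℝ => 2 * Real.sinh t - t) (2 * Real.cosh s - 1) s := by
        have H := ((Real.hasDerivAt_sinh s).const_mul (2:ℝ)).sub (hasDerivAt_id s)
        exact hasDerivAt_congr_d H (by simp only [id_eq])
      exact hinner.log (ne_of_gt h2hs)
    have dlog2 : HasDerivAt (fun t : ℝ => Real.log t) s⁻¹ s := Real.hasDerivAt_log (ne_of_gt hs)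
    exact ((dq.sub_const 1).sub dlog1).add dlog2
  · -- limit
    have hmain : Filter.Tendsto (fun t : ℝ => t * Real.cosh t / Real.sinh t - 1
        - Real.log ((2 * Real.sinh t - t)/t)) (nhdsWithin 0 (Set.Ioi 0)) (nhds 0) := by
      have hrat : Filter.Tendsto (fun t : ℝ => (2 * Real.sinh t - t)/t)
          (nhdsWithin 0 (Set.Ioi 0)) (nhds 1) := by
        have h := (sinh_div_lim.const_mul (2:ℝ)).sub
          (tendsto_const_nhds : Filter.Tendsto (fun _ : ℝ => (1:ℝ)) (nhdsWithin 0 (Set.Ioi 0)) (nhds 1))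
        norm_num at h
        refine h.congr' ?_
        filter_upwards [self_mem_nhdsWithin] with t ht
        have ht' : (t:ℝ) ≠ 0 := ne_of_gt ht
        field_simp
      have hlog : Filter.Tendsto (fun t : ℝ => Real.log ((2 * Real.sinh t - t)/t))
          (nhdsWithin 0 (Set.Ioi 0)) (nhds 0) := by
        have hc := (Real.continuousAt_log one_ne_zero).tendsto
        rw [Real.log_one] at hc
        exact hc.comp hrat
      have := (q_lim.sub
        (tendsto_const_nhds : Filter.Tendsto (fun _ : ℝ => (1:ℝ)) (nhdsWithin 0 (Set.Ioi 0)) (nhds 1))).sub hlog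
      norm_num at this
      exact this
    refine hmain.congr' ?_
    filter_upwards [self_mem_nhdsWithin] with t ht
    have ht0 : (0:ℝ) < t := ht
    have h2ht : 0 < 2 * Real.sinh t - t := by have := b1_pos t ht0; linarith
    rw [Real.log_div (ne_of_gt h2ht) (ne_of_gt ht)]
    ring
  · intro s hs
    have hh : 0 < Real.sinh s := Real.sinh_pos_iff.mpr hs
    have h2hs : 0 < 2 * Real.sinh s - s := by have := b1_pos s hs; linarith
    have key : ((1 * Real.cosh s + s * Real.sinh s) * Real.sinh s - s * Real.cosh s * Real.cosh s) / Real.sinh s ^ 2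
        - (2 * Real.cosh s - 1) / (2 * Real.sinh s - s) + s⁻¹
        = (2*Real.sinh s^3 - (Real.cosh s + 2)*Real.sinh s*s^2 + s^3) / (s * Real.sinh s^2 * (2*Real.sinh s - s)) := by
      have hrw : s * Real.cosh s * Real.cosh s = s * (1 + Real.sinh s ^ 2) := by
        linear_combination s * (Real.cosh_sq_sub_sinh_sq s)
      rw [hrw]
      rw [inv_eq_one_div, div_sub_div _ _ (pow_ne_zero 2 hh.ne') h2hs.ne',
        div_add_div _ _ (mul_ne_zero (pow_ne_zero 2 hh.ne') h2hs.ne') hs.ne',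
        div_eq_div_iff (mul_ne_zero (mul_ne_zero (pow_ne_zero 2 hh.ne') h2hs.ne') hs.ne')
          (mul_ne_zero (mul_ne_zero hs.ne' (pow_ne_zero 2 hh.ne')) h2hs.ne')]
      ring
    rw [key]
    apply div_pos (Lam_pos s hs)
    positivity

lemma phi_pos : ∀ s : ℝ, 0 < s →
    0 < Real.log (s + s * Real.cosh s - Real.sinh s) - Real.log s
      - s * Real.cosh s / Real.sinh s + 1 := by
  apply pos_aux_Ioi (f' := fun s =>
    (1 + s * Real.sinh s) / (s + s * Real.cosh s - Real.sinh s) - s⁻¹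
    - ((1 * Real.cosh s + s * Real.sinh s) * Real.sinh s - s * Real.cosh s * Real.cosh s) / Real.sinh s ^ 2)
  · intro s hs
    have hh : 0 < Real.sinh s := Real.sinh_pos_iff.mpr hs
    have hin : 0 < s + s * Real.cosh s - Real.sinh s := by have := b2_pos s hs; linarith
    have hinner : HasDerivAt (fun t : ℝ => t + t * Real.cosh t - Real.sinh t)
        (1 + s * Real.sinh s) s := by
      have H := ((hasDerivAt_id s).add ((hasDerivAt_id s).mul (Real.hasDerivAt_cosh s))).sub
        (Real.hasDerivAt_sinh s)
      exact hasDerivAt_congr_d H (by simp only [id_eq]; ring)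
    have dlog1 : HasDerivAt (fun t : ℝ => Real.log (t + t * Real.cosh t - Real.sinh t))
        ((1 + s * Real.sinh s) / (s + s * Real.cosh s - Real.sinh s)) s :=
      hinner.log (ne_of_gt hin)
    have dlog2 : HasDerivAt (fun t : ℝ => Real.log t) s⁻¹ s := Real.hasDerivAt_log (ne_of_gt hs)
    have dq : HasDerivAt (fun t : ℝ => t * Real.cosh t / Real.sinh t)
        (((1 * Real.cosh s + s * Real.sinh s) * Real.sinh s - s * Real.cosh s * Real.cosh s) / Real.sinh s ^ 2) s := by
      have H := ((hasDerivAt_id s).mul (Real.hasDerivAt_cosh s)).div (Real.hasDerivAt_sinh s) (ne_of_gt hh)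
      exact hasDerivAt_congr_d H (by simp only [id_eq, Pi.mul_apply])
    exact ((dlog1.sub dlog2).sub dq).add_const 1
  · -- limit
    have hmain : Filter.Tendsto (fun t : ℝ => Real.log ((t + t * Real.cosh t - Real.sinh t)/t)
        - t * Real.cosh t / Real.sinh t + 1) (nhdsWithin 0 (Set.Ioi 0)) (nhds 0) := by
      have hrat : Filter.Tendsto (fun t : ℝ => (t + t * Real.cosh t - Real.sinh t)/t)
          (nhdsWithin 0 (Set.Ioi 0)) (nhds 1) := by
        have h1 := (tendsto_const_nhds : Filter.Tendsto (fun _ : ℝ => (1:ℝ))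
          (nhdsWithin 0 (Set.Ioi 0)) (nhds 1)).add cosh_lim
        have h := h1.sub sinh_div_lim
        norm_num at h
        refine h.congr' ?_
        filter_upwards [self_mem_nhdsWithin] with t ht
        have ht' : (t:ℝ) ≠ 0 := ne_of_gt ht
        field_simp
      have hlog : Filter.Tendsto (fun t : ℝ => Real.log ((t + t * Real.cosh t - Real.sinh t)/t))
          (nhdsWithin 0 (Set.Ioi 0)) (nhds 0) := by
        have hc := (Real.continuousAt_log one_ne_zero).tendsto
        rw [Real.log_one] at hc
        exact hc.comp hrat
      have h2 := (hlog.sub q_lim).add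
        (tendsto_const_nhds : Filter.Tendsto (fun _ : ℝ => (1:ℝ)) (nhdsWithin 0 (Set.Ioi 0)) (nhds 1))
      norm_num at h2
      exact h2
    refine hmain.congr' ?_
    filter_upwards [self_mem_nhdsWithin] with t ht
    have ht0 : (0:ℝ) < t := ht
    have hin : 0 < t + t * Real.cosh t - Real.sinh t := by have := b2_pos t ht0; linarith
    rw [Real.log_div (ne_of_gt hin) (ne_of_gt ht0)]
  · intro s hs
    have hh : 0 < Real.sinh s := Real.sinh_pos_iff.mpr hs
    have hin : 0 < s + s * Real.cosh s - Real.sinh s := by have := b2_pos s hs; linarith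
    have hrw : s * Real.cosh s * Real.cosh s = s * (1 + Real.sinh s ^ 2) := by
      linear_combination s * (Real.cosh_sq_sub_sinh_sq s)
    have key : (1 + s * Real.sinh s) / (s + s * Real.cosh s - Real.sinh s) - s⁻¹
        - ((1 * Real.cosh s + s * Real.sinh s) * Real.sinh s - s * Real.cosh s * Real.cosh s) / Real.sinh s ^ 2
        = (s^2*Real.sinh s^3 + Real.sinh s^3 - Real.cosh s*s^2*Real.sinh s - Real.cosh s^2*s^2*Real.sinh s
            - s^2*Real.sinh s + s^3 + Real.cosh s*s^3)
          / (s * Real.sinh s^2 * (s + s*Real.cosh s - Real.sinh s)) := by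
      rw [hrw]
      rw [inv_eq_one_div, div_sub_div _ _ hin.ne' hs.ne',
        div_sub_div _ _ (mul_ne_zero hin.ne' hs.ne') (pow_ne_zero 2 hh.ne'),
        div_eq_div_iff (mul_ne_zero (mul_ne_zero hin.ne' hs.ne') (pow_ne_zero 2 hh.ne'))
          (mul_ne_zero (mul_ne_zero hs.ne' (pow_ne_zero 2 hh.ne')) hin.ne')]
      ring
    rw [key]
    apply div_pos _ (by positivity)
    have hnum : s^2*Real.sinh s^3 + Real.sinh s^3 - Real.cosh s*s^2*Real.sinh s - Real.cosh s^2*s^2*Real.sinh s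
        - s^2*Real.sinh s + s^3 + Real.cosh s*s^3
        = (Real.cosh s^2 - 1)*Real.sinh s - (Real.cosh s + 2)*Real.sinh s*s^2 + (1 + Real.cosh s)*s^3 := by
      linear_combination (-(1+s^2)*Real.sinh s) * (Real.cosh_sq_sub_sinh_sq s)
    rw [hnum]
    exact The_pos s hs

lemma K1 (s : ℝ) (hs : 0 < s) :
    2 * Real.sinh s / s - 1 < Real.exp (s * Real.cosh s / Real.sinh s - 1) := by
  have hpsi := psi_pos s hs
  have h2hs : 0 < 2 * Real.sinh s - s := by have := b1_pos s hs; linarith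
  have hlog : Real.log ((2 * Real.sinh s - s)/s) < s * Real.cosh s / Real.sinh s - 1 := by
    rw [Real.log_div (ne_of_gt h2hs) (ne_of_gt hs)]
    linarith
  have h3 := Real.exp_lt_exp.mpr hlog
  rw [Real.exp_log (by positivity : (0:ℝ) < (2 * Real.sinh s - s)/s)] at h3
  have heq : (2 * Real.sinh s - s)/s = 2 * Real.sinh s / s - 1 := by
    field_simp
  linarith [h3, heq.symm.le]

lemma K2 (s : ℝ) (hs : 0 < s) :
    Real.exp (s * Real.cosh s / Real.sinh s - 1) < 1 + Real.cosh s - Real.sinh s / s := by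
  have hphi := phi_pos s hs
  have hin : 0 < s + s * Real.cosh s - Real.sinh s := by have := b2_pos s hs; linarith
  have hlog : s * Real.cosh s / Real.sinh s - 1 < Real.log ((s + s * Real.cosh s - Real.sinh s)/s) := by
    rw [Real.log_div (ne_of_gt hin) (ne_of_gt hs)]
    linarith
  have h2 := Real.exp_lt_exp.mpr hlog
  rw [Real.exp_log (by positivity : (0:ℝ) < (s + s * Real.cosh s - Real.sinh s)/s)] at h2
  have heq : (s + s * Real.cosh s - Real.sinh s)/s = 1 + Real.cosh s - Real.sinh s / s := by
    field_simp
  linarith [h2, heq.le]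

noncomputable def G (a b : ℝ) : ℝ := Real.sqrt (a * b)
noncomputable def L (a b : ℝ) : ℝ := (a - b) / (Real.log a - Real.log b)
noncomputable def I (a b : ℝ) : ℝ := (1 / Real.exp 1) * (a ^ a / b ^ b) ^ (1 / (a - b))

lemma G_symm (a b : ℝ) : G a b = G b a := by unfold G; rw [mul_comm]

lemma L_symm (a b : ℝ) : L a b = L b a := by
  unfold L
  rw [show b - a = -(a - b) by ring, show Real.log b - Real.log a = -(Real.log a - Real.log b) by ring,
    neg_div_neg_eq]

lemma I_symm (a b : ℝ) (ha : 0 < a) (hb : 0 < b) : I a b = I b a := by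
  unfold I
  have ha' : (0:ℝ) < a ^ (a:ℝ) := Real.rpow_pos_of_pos ha a
  have hb' : (0:ℝ) < b ^ (b:ℝ) := Real.rpow_pos_of_pos hb b
  have hd : (0:ℝ) < b ^ (b:ℝ) / a ^ (a:ℝ) := div_pos hb' ha'
  congr 1
  calc (a ^ (a:ℝ) / b ^ (b:ℝ)) ^ (1/(a-b))
      = ((b ^ (b:ℝ) / a ^ (a:ℝ))⁻¹) ^ (1/(a-b)) := by rw [inv_div]
    _ = ((b ^ (b:ℝ) / a ^ (a:ℝ)) ^ (1/(a-b)))⁻¹ := by rw [Real.inv_rpow hd.le]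
    _ = (b ^ (b:ℝ) / a ^ (a:ℝ)) ^ (-(1/(a-b))) := by rw [← Real.rpow_neg hd.le]
    _ = (b ^ (b:ℝ) / a ^ (a:ℝ)) ^ (1/(b-a)) := by
        rw [show b - a = -(a-b) by ring, div_neg]

lemma main_aux (a b : ℝ) (ha : 0 < a) (hb : 0 < b) (hba : b < a) :
    (L (I a b) (G a b)) ^ 2 < L a b * L (I a b) (G a b) ∧
    L a b * L (I a b) (G a b) < L (I a b ^ 2) (G a b ^ 2) ∧
    L (I a b ^ 2) (G a b ^ 2) < L a b * (I a b + G a b) / 2 := by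
  obtain ⟨s, hs_def⟩ : ∃ s, s = (Real.log a - Real.log b)/2 := ⟨_, rfl⟩
  obtain ⟨g, hg_def⟩ : ∃ g, g = Real.sqrt (a * b) := ⟨_, rfl⟩
  have hs : 0 < s := by
    have := Real.log_lt_log hb hba
    rw [hs_def]; linarith
  have hg : 0 < g := by rw [hg_def]; exact Real.sqrt_pos.2 (mul_pos ha hb)
  have hla : Real.log a = Real.log g + s := by
    rw [hg_def, Real.log_sqrt (mul_pos ha hb).le, Real.log_mul (ne_of_gt ha) (ne_of_gt hb), hs_def]
    ring
  have hlb : Real.log b = Real.log g + (-s) := by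
    rw [hg_def, Real.log_sqrt (mul_pos ha hb).le, Real.log_mul (ne_of_gt ha) (ne_of_gt hb), hs_def]
    ring
  have ha' : a = g * Real.exp s := by
    calc a = Real.exp (Real.log a) := (Real.exp_log ha).symm
      _ = g * Real.exp s := by rw [hla, Real.exp_add, Real.exp_log hg]
  have hb' : b = g * Real.exp (-s) := by
    calc b = Real.exp (Real.log b) := (Real.exp_log hb).symm
      _ = g * Real.exp (-s) := by rw [hlb, Real.exp_add, Real.exp_log hg]
  have hh : 0 < Real.sinh s := Real.sinh_pos_iff.mpr hs
  have hscs : Real.sinh s < s * Real.cosh s := by have := b2_pos s hs; linarith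
  obtain ⟨x, hx_def⟩ : ∃ x, x = s * Real.cosh s / Real.sinh s - 1 := ⟨_, rfl⟩
  have hx : 0 < x := by
    rw [hx_def]
    have h1 : 1 < s * Real.cosh s / Real.sinh s := (one_lt_div hh).mpr hscs
    linarith
  have hG : G a b = g := by rw [G, hg_def]
  have hab_sub : a - b = g * (2 * Real.sinh s) := by rw [ha', hb', Real.sinh_eq]; ring
  have hlog_sub : Real.log a - Real.log b = 2 * s := by rw [hla, hlb]; ring
  have hab_ne : a - b ≠ 0 := by rw [hab_sub]; positivity
  have hL : L a b = g * (Real.sinh s / s) := by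
    rw [L, hab_sub, hlog_sub]
    field_simp
  have hI : I a b = g * Real.exp x := by
    rw [I]
    rw [Real.rpow_def_of_pos ha, Real.rpow_def_of_pos hb, ← Real.exp_sub]
    rw [Real.rpow_def_of_pos (Real.exp_pos _), Real.log_exp]
    rw [one_div (Real.exp 1), ← Real.exp_neg]
    rw [← Real.exp_add]
    have hgrw : g = Real.exp (Real.log g) := (Real.exp_log hg).symm
    rw [hgrw, ← Real.exp_add]
    congr 1
    have hnum : Real.log a * a - Real.log b * b
        = g * (2 * Real.log g * Real.sinh s + 2 * s * Real.cosh s) := by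
      rw [hla, hlb, ha', hb', Real.sinh_eq, Real.cosh_eq]
      ring
    rw [hnum, hab_sub, hx_def]
    field_simp
    ring
  have hIpos : 0 < I a b := by rw [hI]; positivity
  have hlogI : Real.log (I a b) = Real.log g + x := by
    rw [hI, Real.log_mul (ne_of_gt hg) (Real.exp_ne_zero x), Real.log_exp]
  have hlogG : Real.log (G a b) = Real.log g := by rw [hG]
  have hex1 : 1 < Real.exp x := by
    calc (1:ℝ) = Real.exp 0 := Real.exp_zero.symm
      _ < Real.exp x := Real.exp_lt_exp.mpr hx
  have hLIG : L (I a b) (G a b) = g * ((Real.exp x - 1)/x) := by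
    rw [L, hlogI, hlogG, hI, hG]
    have : Real.log g + x - Real.log g = x := by ring
    rw [this]
    field_simp
  have hLIG2 : L (I a b ^ 2) (G a b ^ 2)
      = (g * ((Real.exp x - 1)/x)) * (g * (Real.exp x + 1)/2) := by
    rw [L, Real.log_pow, Real.log_pow, hlogI, hlogG, hI, hG]
    push_cast
    have : (2:ℝ) * (Real.log g + x) - 2 * Real.log g = 2 * x := by ring
    rw [this]
    field_simp
    ring
  have k1 := K1 s hs
  have k2 := K2 s hs
  rw [← hx_def] at k1 k2
  have hdiv : s * (Real.sinh s / s) = Real.sinh s := by field_simp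
  have hhx : Real.sinh s * x = s * Real.cosh s - Real.sinh s := by
    rw [hx_def]; field_simp
  have hmpos : 0 < Real.sinh s / s := div_pos hh hs
  have hPpos : 0 < (Real.exp x - 1)/x := div_pos (by linarith) hx
  have hPltm : (Real.exp x - 1)/x < Real.sinh s / s := by
    rw [div_lt_div_iff₀ hx hs]
    have e1 : s * Real.exp x < s * (1 + Real.cosh s - Real.sinh s/s) :=
      mul_lt_mul_of_pos_left k2 hs
    have e2 : s * (1 + Real.cosh s - Real.sinh s/s) = s + s*Real.cosh s - Real.sinh s := by
      field_simp
    linarith [e1, e2, hhx]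
  have hk1' : Real.sinh s / s < (Real.exp x + 1)/2 := by
    have h3 : 2 * Real.sinh s / s = 2 * (Real.sinh s / s) := by ring
    rw [h3] at k1
    linarith
  refine ⟨?_, ?_, ?_⟩
  · rw [hLIG, hL, sq]
    exact mul_lt_mul_of_pos_right (mul_lt_mul_of_pos_left hPltm hg)
      (mul_pos hg hPpos)
  · rw [hL, hLIG, hLIG2]
    have step := mul_lt_mul_of_pos_right (mul_lt_mul_of_pos_left hk1' hg)
      (mul_pos hg hPpos)
    linarith [step]
  · rw [hLIG2, hL, hI, hG]
    have hQpos : 0 < g * (Real.exp x + 1)/2 := by positivity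
    have step := mul_lt_mul_of_pos_right (mul_lt_mul_of_pos_left hPltm hg) hQpos
    linarith [step]

theorem stmt_9 (a b : ℝ) (ha : 0 < a) (hb : 0 < b) (hab : a ≠ b) :
    (L (I a b) (G a b)) ^ 2 < L a b * L (I a b) (G a b) ∧
    L a b * L (I a b) (G a b) < L (I a b ^ 2) (G a b ^ 2) ∧
    L (I a b ^ 2) (G a b ^ 2) < L a b * (I a b + G a b) / 2 := by
  rcases hab.lt_or_gt with hba | hba
  · have H := main_aux b a hb ha hba
    rwa [I_symm b a hb ha, G_symm b a, L_symm b a] at H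
  · exact main_aux a b ha hb hba
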